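/- Let Q be an even prime power with Q > 2, and α ∈ F_{Q^3}^*. Then x^(Q^2+Q+2) + α·x permutes F_{Q^3} if and only if α^(Q^2) + α^Q + α = 0, i.e., the trace of α from F_{Q^3} to F_Q is zero. -/

import Mathlib

set_option maxHeartbeats 1600000 in
theorem stmt_13 (Q : ℕ) (hQeven : Q % 2 = 0) (hQ : 2 < Q)
    (F : Type*) [Field F] [Fintype F] (hF : Fintype.card F = Q ^ 3)
    (α : F) (hα : α ≠ 0) :
    Function.Bijective (fun x : F => x ^ (Q ^ 2 + Q + 2) + α * x) ↔
      α ^ (Q ^ 2) + α ^ Q + α = 0 := by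
  classical
  -- characteristic 2
  have hchar2 : ringChar F = 2 := by
    obtain ⟨n, hp, hcard⟩ := FiniteField.card F (ringChar F)
    have h2dvd : (2:ℕ) ∣ ringChar F ^ (n:ℕ) := by
      rw [← hcard, hF]
      exact dvd_pow (Nat.dvd_of_mod_eq_zero hQeven) (by norm_num)
    have h2p := Nat.Prime.dvd_of_dvd_pow Nat.prime_two h2dvd
    exact ((Nat.prime_dvd_prime_iff_eq Nat.prime_two hp).mp h2p).symm
  haveI hcharP : CharP F 2 := hchar2 ▸ ringChar.charP F
  haveI : Fact (Nat.Prime 2) := ⟨Nat.prime_two⟩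
  -- Q = 2 ^ m
  obtain ⟨n, hp, hcard⟩ := FiniteField.card F 2
  have hQdvd : Q ∣ 2 ^ (n:ℕ) := by
    rw [← hcard, hF]; exact dvd_pow_self Q (by norm_num)
  obtain ⟨m, hmn, hQm⟩ := (Nat.dvd_prime_pow Nat.prime_two).mp hQdvd
  have hm2 : 2 ≤ m := by
    by_contra hmlt
    interval_cases m <;> omega
  have hQ0 : 0 < Q := by omega
  have h2z : (2:F) = 0 := by
    have := CharP.cast_eq_zero F 2
    exact_mod_cast this
  have hcard3 : Fintype.card F = 2 ^ (3*m) := by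
    rw [hF, hQm, ← pow_mul, mul_comm]
  -- basic pow facts
  have hpowcard : ∀ x : F, x ^ (Q^3) = x := by
    intro x; rw [← hF]; exact FiniteField.pow_card x
  have hfrob : ∀ x y : F, (x+y)^Q = x^Q + y^Q := by
    intro x y; rw [hQm]; exact add_pow_char_pow x y 2 m
  have cyc1 : (α^Q)^Q = α^(Q^2) := by rw [← pow_mul, sq]
  have cyc2 : (α^(Q^2))^Q = α := by
    rw [← pow_mul]
    have h1 : Q^2*Q = Q^3 := by ring
    rw [h1]; exact hpowcard α
  -- the function rewrites as x * (x^(Q²+Q+1) + α)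
  have hfx : ∀ x : F, x ^ (Q ^ 2 + Q + 2) + α * x = x * (x^(Q^2+Q+1) + α) := by
    intro x
    have : Q^2+Q+2 = (Q^2+Q+1)+1 := by ring
    rw [this, pow_succ]; ring
  have hNfix : ∀ z : F, (z^(Q^2+Q+1))^Q = z^(Q^2+Q+1) := by
    intro z
    rw [← pow_mul]
    have h1 : (Q^2+Q+1)*Q = Q^3 + (Q^2 + Q) := by ring
    rw [h1, pow_add, hpowcard z]
    conv_rhs => rw [pow_succ]
    ring
  have hconjQ : ∀ z : F, z^Q = z → (z+α)^Q = z + α^Q := by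
    intro z hz; rw [hfrob, hz]
  have hconjQ2 : ∀ z : F, z^Q = z → (z+α)^(Q^2) = z + α^(Q^2) := by
    intro z hz
    calc (z+α)^(Q^2) = ((z+α)^Q)^Q := by rw [← pow_mul, ← sq]
    _ = (z + α^Q)^Q := by rw [hconjQ z hz]
    _ = z + α^(Q^2) := by rw [hfrob, hz, cyc1]
  have hsplit : ∀ z : F, z^(Q^2+Q+1) = z^(Q^2)*z^Q*z := by
    intro z; rw [pow_add, pow_add, pow_one]
  -- injectivity when trace is zero
  have hinj_of_T : α ^ (Q ^ 2) + α ^ Q + α = 0 →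
      Function.Injective (fun x : F => x ^ (Q ^ 2 + Q + 2) + α * x) := by
    intro hT
    have Lα : α^Q ≠ α := by
      intro h
      have h2' : α^(Q^2) = α := by rw [← cyc1, h]; exact h
      have hT' := hT
      rw [h2', h] at hT'
      exact hα (by linear_combination hT' - α * h2z)
    intro x y hxy
    simp only [hfx] at hxy
    set a := x^(Q^2+Q+1) with ha
    set b := y^(Q^2+Q+1) with hb
    have haQ : a^Q = a := hNfix x
    have hbQ : b^Q = b := hNfix y
    -- take norms
    have hN : a*(a+α^(Q^2))*(a+α^Q)*(a+α) = b*(b+α^(Q^2))*(b+α^Q)*(b+α) := by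
      have hc := congrArg (fun z : F => z^(Q^2+Q+1)) hxy
      simp only [mul_pow] at hc
      rw [hsplit (a+α), hsplit (b+α), hconjQ a haQ, hconjQ b hbQ,
          hconjQ2 a haQ, hconjQ2 b hbQ, ← ha, ← hb] at hc
      linear_combination hc
    have hquart : ∀ t : F, t*(t+α^(Q^2))*(t+α^Q)*(t+α) =
        t^4 + (α*α^Q + α*α^(Q^2) + α^Q*α^(Q^2))*t^2 + α*α^Q*α^(Q^2)*t := by
      intro t; linear_combination t^3 * hT
    have hq : a^4 + (α*α^Q + α*α^(Q^2) + α^Q*α^(Q^2))*a^2 + α*α^Q*α^(Q^2)*a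
        = b^4 + (α*α^Q + α*α^(Q^2) + α^Q*α^(Q^2))*b^2 + α*α^Q*α^(Q^2)*b := by
      rw [← hquart a, ← hquart b]; exact hN
    have hsum : (a+b)^4 + (α*α^Q + α*α^(Q^2) + α^Q*α^(Q^2))*(a+b)^2
        + α*α^Q*α^(Q^2)*(a+b) = 0 := by
      linear_combination hq + (b*(α*α^Q*α^(Q^2)) + b^2*(α*α^Q + α*α^(Q^2) + α^Q*α^(Q^2))
        + b^4 + a*b*(α*α^Q + α*α^(Q^2) + α^Q*α^(Q^2)) + 2*a*b^3 + 3*a^2*b^2 + 2*a^3*b) * h2z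
    have hprod : (a+b)*((a+b)+α^(Q^2))*((a+b)+α^Q)*((a+b)+α) = 0 := by
      rw [hquart (a+b)]; exact hsum
    have hwQ : (a+b)^Q = a+b := by rw [hfrob, haQ, hbQ]
    have hab : a = b := by
      rcases mul_eq_zero.mp hprod with h3 | h4
      · rcases mul_eq_zero.mp h3 with h5 | h6
        · rcases mul_eq_zero.mp h5 with h7 | h8
          · -- a + b = 0
            linear_combination h7 - b * h2z
          · -- a+b+α^{Q²} = 0
            exfalso
            have hw : α^(Q^2) = a+b := by linear_combination h8 - (a+b) * h2z
            have h1 : α = α^(Q^2) := by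
              calc α = (α^(Q^2))^Q := cyc2.symm
              _ = (a+b)^Q := by rw [hw]
              _ = a+b := hwQ
              _ = α^(Q^2) := hw.symm
            have h3' : α^Q = (α^(Q^2))^Q := by rw [← h1]
            exact Lα (h3'.trans cyc2)
        · -- a+b+α^Q = 0
          exfalso
          have hw : α^Q = a+b := by linear_combination h6 - (a+b) * h2z
          have h1 : α^(Q^2) = α^Q := by rw [← cyc1, hw]; exact hwQ
          have h2' : α = α^Q := by
            calc α = (α^(Q^2))^Q := cyc2.symm
            _ = (α^Q)^Q := by rw [h1]
            _ = α^(Q^2) := cyc1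
            _ = α^Q := h1
          exact Lα h2'.symm
      · -- a+b+α = 0
        exfalso
        have hw : α = a+b := by linear_combination h4 - (a+b) * h2z
        have : α^Q = α := by rw [hw]; exact hwQ
        exact Lα this
    rw [hab] at hxy
    have hbα : b + α ≠ 0 := by
      intro h
      have hw : α = b := by linear_combination h - b * h2z
      exact Lα (by rw [hw]; exact hbQ)
    exact mul_right_cancel₀ hbα hxy
  constructor
  · intro hbij
    have hinjf := hbij.injective
    by_contra hT
    -- cyclic generator of the units
    obtain ⟨ζ, hζ⟩ := IsCyclic.exists_generator (α := Fˣ)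
    have hordζ : orderOf ζ = Q^3 - 1 := by
      rw [orderOf_eq_card_of_forall_mem_zpowers hζ, Nat.card_eq_fintype_card, Fintype.card_units, hF]
    have hQ1 : 1 ≤ Q := by omega
    have hQ3' : 1 ≤ Q^3 := Nat.one_le_pow _ _ (by omega)
    have hQ31 : Q^3 - 1 = (Q^2+Q+1)*(Q-1) := by
      zify [hQ1, hQ3']; ring
    -- norm surjectivity
    have hnormsurj : ∀ t : F, t ≠ 0 → t^Q = t → ∃ x : F, x ≠ 0 ∧ x^(Q^2+Q+1) = t := by
      intro t ht htQ
      obtain ⟨k, hk⟩ := (Submonoid.mem_powers_iff _ _).mp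
        (mem_powers_iff_mem_zpowers.mpr (hζ (Units.mk0 t ht)))
      have ht1 : (Units.mk0 t ht)^(Q-1) = 1 := by
        have htQ1 : t^(Q-1) = 1 := by
          have h1 : t^(Q-1) * t = 1 * t := by
            rw [← pow_succ, one_mul]
            have : Q - 1 + 1 = Q := by omega
            rw [this]; exact htQ
          exact mul_right_cancel₀ ht h1
        ext
        rw [Units.val_pow_eq_pow_val]
        exact htQ1
      have hdvd : orderOf ζ ∣ k*(Q-1) := by
        apply orderOf_dvd_of_pow_eq_one
        rw [pow_mul, hk]
        exact ht1
      rw [hordζ, hQ31] at hdvd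
      have hdvd2 : (Q^2+Q+1) ∣ k := by
        have hpos : 0 < Q-1 := by omega
        exact (Nat.mul_dvd_mul_iff_right hpos).mp hdvd
      obtain ⟨j, hj⟩ := hdvd2
      refine ⟨((ζ^j : Fˣ) : F), Units.ne_zero _, ?_⟩
      have hu : (ζ^j)^(Q^2+Q+1) = Units.mk0 t ht := by
        rw [← pow_mul, mul_comm j (Q^2+Q+1), ← hj]
        exact hk
      have hv := congrArg (Units.val) hu
      push_cast at hv ⊢
      exact hv
    -- the subfield K as a finset
    let KF : Finset F := Finset.univ.filter (fun x => x^Q = x)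
    have hKFmem : ∀ x : F, x ∈ KF ↔ x^Q = x := by
      intro x; simp [KF]
    -- lower bound on the cardinality of K∗
    have hKstar : Q - 1 ≤ (KF.erase 0).card := by
      have hmaps : ∀ j ∈ Finset.range (Q-1),
          (((ζ^((Q^2+Q+1)*j) : Fˣ) : F)) ∈ KF.erase 0 := by
        intro j _
        rw [Finset.mem_erase, hKFmem]
        refine ⟨Units.ne_zero _, ?_⟩
        have h1 : ((ζ^((Q^2+Q+1)*j))^(Q-1) : Fˣ) = 1 := by
          rw [← pow_mul]
          have : (Q^2+Q+1)*j*(Q-1) = (Q^3-1)*j := by rw [hQ31]; ring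
          rw [this, pow_mul, ← hordζ, pow_orderOf_eq_one, one_pow]
        have h2 : (((ζ^((Q^2+Q+1)*j) : Fˣ) : F))^(Q-1) = 1 := by
          rw [← Units.val_pow_eq_pow_val, h1]; rfl
        calc (((ζ^((Q^2+Q+1)*j) : Fˣ) : F))^Q
            = (((ζ^((Q^2+Q+1)*j) : Fˣ) : F))^(Q-1) * (((ζ^((Q^2+Q+1)*j) : Fˣ) : F)) := by
              rw [← pow_succ]
              congr 1
              omega
        _ = (((ζ^((Q^2+Q+1)*j) : Fˣ) : F)) := by rw [h2, one_mul]
      have hinjmap : Set.InjOn (fun j => ((ζ^((Q^2+Q+1)*j) : Fˣ) : F)) (Finset.range (Q-1)) := by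
        intro j1 hj1 j2 hj2 hfeq
        simp only [Finset.coe_range, Set.mem_Iio] at hj1 hj2
        have huniteq : (ζ^((Q^2+Q+1)*j1) : Fˣ) = ζ^((Q^2+Q+1)*j2) := Units.ext hfeq
        have hmod := pow_eq_pow_iff_modEq.mp huniteq
        rw [hordζ, hQ31] at hmod
        have hs1 : 1 ≤ Q^2+Q+1 := Nat.le_add_left 1 (Q^2+Q)
        have hlt1 : (Q^2+Q+1)*j1 < (Q^2+Q+1)*(Q-1) := by nlinarith
        have hlt2 : (Q^2+Q+1)*j2 < (Q^2+Q+1)*(Q-1) := by nlinarith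
        have heq' : (Q^2+Q+1)*j1 = (Q^2+Q+1)*j2 := by
          unfold Nat.ModEq at hmod
          rwa [Nat.mod_eq_of_lt hlt1, Nat.mod_eq_of_lt hlt2] at hmod
        have : 0 < Q^2+Q+1 := by positivity
        exact Nat.eq_of_mul_eq_mul_left this heq'
      calc Q - 1 = (Finset.range (Q-1)).card := (Finset.card_range _).symm
      _ = ((Finset.range (Q-1)).image (fun j => ((ζ^((Q^2+Q+1)*j) : Fˣ) : F))).card := by
          rw [Finset.card_image_of_injOn hinjmap]
      _ ≤ (KF.erase 0).card := by
          apply Finset.card_le_card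
          intro x hx
          obtain ⟨j, hj, rfl⟩ := Finset.mem_image.mp hx
          exact hmaps j hj
    have hKFQ : Q ≤ KF.card := by
      have h0 : (0:F) ∈ KF := by
        rw [hKFmem]
        rw [zero_pow (by omega : Q ≠ 0)]
      have := Finset.card_erase_add_one h0
      omega
    -- trace machinery
    set τf : F → F := fun x => ∑ i ∈ Finset.range m, x^(2^i) with hτf
    have hτadd : ∀ x y : F, τf (x+y) = τf x + τf y := by
      intro x y
      rw [hτf]
      simp only
      rw [← Finset.sum_add_distrib]
      apply Finset.sum_congr rfl
      intro i _
      exact add_pow_char_pow x y 2 i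
    have hτsq : ∀ x : F, x^Q = x → τf (x^2) = τf x := by
      intro x hx
      have hterm : ∀ i ∈ Finset.range m, (x^2)^(2^i) = x^(2^(i+1)) := by
        intro i _
        rw [← pow_mul, ← pow_succ']
      have hxm : x^(2^m) = x := by rw [← hQm]; exact hx
      have hsum1 : (∑ i ∈ Finset.range m, x^(2^(i+1))) + x^(2^0)
          = (∑ i ∈ Finset.range m, x^(2^i)) + x^(2^m) :=
        (Finset.sum_range_succ' (fun i => x^(2^i)) m).symm.trans
          (Finset.sum_range_succ (fun i => x^(2^i)) m)
      rw [hτf]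
      simp only
      rw [Finset.sum_congr rfl hterm]
      have : x^(2^0) = x := by norm_num
      rw [this] at hsum1
      rw [hxm] at hsum1
      linear_combination hsum1
    have hτ01 : ∀ x : F, x^Q = x → τf x = 0 ∨ τf x = 1 := by
      intro x hx
      have hsq : (τf x)^2 = τf (x^2) := by
        rw [hτf]
        simp only
        rw [sum_pow_char]
        apply Finset.sum_congr rfl
        intro i _
        rw [← pow_mul, mul_comm, pow_mul]
      rw [hτsq x hx] at hsq
      have : τf x * (τf x - 1) = 0 := by linear_combination hsq
      rcases mul_eq_zero.mp this with h | h
      · left; exact h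
      · right; linear_combination h
    have hτpzero : ∀ v : F, v^Q = v → τf (v^2 + v) = 0 := by
      intro v hv
      rw [hτadd, hτsq v hv]
      linear_combination τf v * h2z
    -- ℘(K) = ker τ by counting
    have hKFclosed : ∀ v : F, v^Q = v → (v^2+v)^Q = v^2+v := by
      intro v hv
      rw [hfrob, ← pow_mul, mul_comm 2 Q, pow_mul, hv]
    set Kerτ : Finset F := KF.filter (fun x => τf x = 0) with hKerτ
    set KI : Finset F := KF.image (fun v => v^2 + v) with hKI
    have hKIsub : KI ⊆ Kerτ := by
      intro x hx
      obtain ⟨v, hv, rfl⟩ := Finset.mem_image.mp hx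
      rw [hKFmem] at hv
      rw [hKerτ, Finset.mem_filter, hKFmem]
      exact ⟨hKFclosed v hv, hτpzero v hv⟩
    have hKercard : Kerτ.card ≤ 2^(m-1) := by
      set τP : Polynomial F := ∑ i ∈ Finset.range m, Polynomial.X ^ (2^i) with hτP
      have hτPne : τP ≠ 0 := by
        intro h
        have hc := congrArg (fun p => Polynomial.coeff p (2^(m-1))) h
        simp only [hτP, Polynomial.finset_sum_coeff, Polynomial.coeff_X_pow,
          Polynomial.coeff_zero] at hc
        have hcond : ∀ i ∈ Finset.range m,
            (if (2:ℕ)^(m-1) = 2^i then (1:F) else 0) = if m-1 = i then (1:F) else 0 := by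
          intro i _
          by_cases h : m-1 = i
          · rw [if_pos h, if_pos (by rw [h])]
          · rw [if_neg h, if_neg (fun hc => h (Nat.pow_right_injective (le_refl 2) hc))]
        rw [Finset.sum_congr rfl hcond, Finset.sum_ite_eq] at hc
        rw [if_pos (Finset.mem_range.mpr (by omega))] at hc
        exact one_ne_zero hc
      have hτPdeg : τP.natDegree ≤ 2^(m-1) := by
        rw [hτP]
        apply Polynomial.natDegree_sum_le_of_forall_le
        intro i hi
        rw [Polynomial.natDegree_X_pow]
        exact Nat.pow_le_pow_right (by norm_num) (by
          have := Finset.mem_range.mp hi; omega)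
      have hsubroots : Kerτ ⊆ τP.roots.toFinset := by
        intro x hx
        rw [hKerτ, Finset.mem_filter] at hx
        rw [Multiset.mem_toFinset, Polynomial.mem_roots']
        refine ⟨hτPne, ?_⟩
        rw [Polynomial.IsRoot, hτP]
        rw [Polynomial.eval_finset_sum]
        simp only [Polynomial.eval_pow, Polynomial.eval_X]
        exact hx.2
      calc Kerτ.card ≤ τP.roots.toFinset.card := Finset.card_le_card hsubroots
      _ ≤ Multiset.card τP.roots := Multiset.toFinset_card_le _
      _ ≤ τP.natDegree := Polynomial.card_roots' τP
      _ ≤ 2^(m-1) := hτPdeg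
    have hKIcard : KF.card ≤ 2 * KI.card := by
      rw [hKI]
      apply Finset.card_le_mul_card_image
      intro a _
      by_cases hne : (KF.filter (fun v => v^2+v = a)).Nonempty
      · obtain ⟨v0, hv0⟩ := hne
        rw [Finset.mem_filter] at hv0
        have hsub : KF.filter (fun v => v^2+v = a) ⊆ {v0, v0+1} := by
          intro v hv
          rw [Finset.mem_filter] at hv
          have hvv : (v + v0)^2 = v + v0 := by
            have h1 : v^2 + v = v0^2 + v0 := by rw [hv.2, hv0.2]
            have hch : ∀ u u' : F, (u+u')^2 = u^2 + u'^2 := by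
              intro u u'
              have := add_pow_char_pow u u' 2 1
              simpa using this
            rw [hch]
            linear_combination h1 + (v0^2 - v)*h2z
          have : (v+v0) * ((v+v0) - 1) = 0 := by linear_combination hvv
          rcases mul_eq_zero.mp this with h | h
          · have hv0' : v = v0 := by linear_combination h - v0*h2z
            simp [hv0']
          · have hv1 : v = v0 + 1 := by linear_combination h - v0*h2z
            simp [hv1]
        calc (KF.filter (fun v => v^2+v = a)).card ≤ ({v0, v0+1} : Finset F).card :=
              Finset.card_le_card hsub
        _ ≤ 2 := Finset.card_insert_le _ _ |>.trans (by simp)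
      · rw [Finset.not_nonempty_iff_eq_empty] at hne
        rw [hne]
        simp
    have hQhalf : Q = 2*2^(m-1) := by
      rw [hQm]
      conv_rhs => rw [← pow_succ']
      congr 1
      omega
    have hKIeq : KI = Kerτ := by
      apply Finset.eq_of_subset_of_card_le hKIsub
      omega
    have hsolv : ∀ x : F, x^Q = x → τf x = 0 → ∃ v : F, v^Q = v ∧ v^2 + v = x := by
      intro x hx hτx
      have hxmem : x ∈ Kerτ := by
        rw [hKerτ, Finset.mem_filter, hKFmem]
        exact ⟨hx, hτx⟩
      rw [← hKIeq, hKI] at hxmem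
      obtain ⟨v, hv, hvx⟩ := Finset.mem_image.mp hxmem
      rw [hKFmem] at hv
      exact ⟨v, hv, hvx⟩
    -- case analysis on whether α lies in K
    by_cases hαQ : α^Q = α
    · -- α ∈ K : collision f x = f 0
      obtain ⟨x, hx0, hxs⟩ := hnormsurj α hα hαQ
      have hfeq : (fun x : F => x ^ (Q ^ 2 + Q + 2) + α * x) x
          = (fun x : F => x ^ (Q ^ 2 + Q + 2) + α * x) 0 := by
        simp only
        rw [hfx x, hfx 0, hxs]
        have hαα : α + α = 0 := by linear_combination α*h2z
        rw [hαα, mul_zero, zero_mul]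
      exact hx0 (hinjf hfeq)
    · -- α ∉ K
      have hfac1 : ∀ t : F, t^Q = t → t + α ≠ 0 := by
        intro t ht h
        have hαt : α = t := by linear_combination h - t*h2z
        exact hαQ (by rw [hαt]; exact ht)
      have hfac2 : ∀ t : F, t^Q = t → t + α^Q ≠ 0 := by
        intro t ht h
        have he : α^Q = t := by linear_combination h - t*h2z
        have h1 : α^(Q^2) = α^Q := by rw [← cyc1, he]; exact ht
        have h2' : α = α^Q := by
          calc α = (α^(Q^2))^Q := cyc2.symm
          _ = (α^Q)^Q := by rw [h1]
          _ = α^(Q^2) := cyc1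
          _ = α^Q := h1
        exact hαQ h2'.symm
      have hfac3 : ∀ t : F, t^Q = t → t + α^(Q^2) ≠ 0 := by
        intro t ht h
        have he : α^(Q^2) = t := by linear_combination h - t*h2z
        have h1 : α = α^(Q^2) := by
          calc α = (α^(Q^2))^Q := cyc2.symm
          _ = t^Q := by rw [he]
          _ = t := ht
          _ = α^(Q^2) := he.symm
        have h2' : α^Q = α := by
          conv_lhs => rw [h1]
          exact cyc2
        exact hαQ h2'
      -- abbreviations
      set T := α^(Q^2) + α^Q + α with hTdef
      set S := α*α^Q + α*α^(Q^2) + α^Q*α^(Q^2) with hSdef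
      set nn := α*α^Q*α^(Q^2) with hnndef
      have hTne : T ≠ 0 := hT
      have hTK : T^Q = T := by
        rw [hTdef, hfrob, hfrob, cyc2, cyc1]
        ring
      have hSK : S^Q = S := by
        rw [hSdef, hfrob, hfrob, mul_pow, mul_pow, mul_pow, cyc1, cyc2]
        ring
      have hnnK : nn^Q = nn := by
        rw [hnndef, mul_pow, mul_pow, cyc1, cyc2]
        ring
      have hTinvK : (T⁻¹)^Q = T⁻¹ := by rw [inv_pow, hTK]
      have hsqrt : ∀ x : F, (x^(2^(3*m-1)))^2 = x := by
        intro x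
        rw [← pow_mul]
        have he : 2^(3*m-1)*2 = 2^(3*m) := by
          rw [← pow_succ]
          congr 1
          omega
        rw [he, ← hcard3]
        exact FiniteField.pow_card x
      set μ := (nn * T⁻¹)^(2^(3*m-1)) with hμdef
      have hμsq : μ^2 = nn * T⁻¹ := hsqrt _
      have hμK : μ^Q = μ := by
        have h1 : (μ^Q)^2 = μ^2 := by
          rw [← pow_mul, mul_comm Q 2, pow_mul, hμsq, mul_pow, hnnK, hTinvK, ← hμsq]
        have h2' : (μ^Q - μ)*(μ^Q + μ) = 0 := by linear_combination h1
        rcases mul_eq_zero.mp h2' with h | h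
        · exact sub_eq_zero.mp h
        · linear_combination h - μ*h2z
      set c := S*T⁻¹ + μ with hcdef
      have hcK : c^Q = c := by rw [hcdef, hfrob, mul_pow, hSK, hTinvK, hμK]
      -- existence of a collision parameter
      have hcoll : ∃ w : F, (w^Q = w ∧ w ≠ 0) ∧
          ∃ v : F, v^Q = v ∧ v^2+v = w*T⁻¹ + 1 + c*w⁻¹ := by
        by_contra hno
        push_neg at hno
        have hτβ : ∀ w : F, w^Q = w → w ≠ 0 → τf (w*T⁻¹ + 1 + c*w⁻¹) = 1 := by
          intro w hw hw0
          have hwinv : (w⁻¹)^Q = w⁻¹ := by rw [inv_pow, hw]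
          have hβK : (w*T⁻¹ + 1 + c*w⁻¹)^Q = w*T⁻¹ + 1 + c*w⁻¹ := by
            rw [hfrob, hfrob, mul_pow, mul_pow, one_pow, hw, hTinvK, hcK, hwinv]
          rcases hτ01 _ hβK with h0 | h1
          · exfalso
            obtain ⟨v, hv, hveq⟩ := hsolv _ hβK h0
            exact hno w ⟨hw, hw0⟩ v hv hveq
          · exact h1
        rcases Nat.lt_or_ge m 3 with hm3 | hm3
        · -- m = 2, Q = 4
          have hm2' : m = 2 := by omega
          have hQ4 : Q = 4 := by rw [hQm, hm2']; norm_num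
          set P : Polynomial F := Polynomial.C (T⁻¹ + c^2)
            + Polynomial.C ((T⁻¹)^2 + c) * Polynomial.X^1 + Polynomial.X^2 with hPdef
          have hPne : P ≠ 0 := by
            intro h
            have hc := congrArg (fun p => Polynomial.coeff p 2) h
            simp only [hPdef, Polynomial.coeff_add, Polynomial.coeff_C_mul,
              Polynomial.coeff_X_pow, Polynomial.coeff_zero] at hc
            rw [Polynomial.coeff_C] at hc
            norm_num at hc
          have hPdeg : P.natDegree ≤ 2 := by
            rw [hPdef]
            refine le_trans (Polynomial.natDegree_add_le _ _) (max_le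
              (le_trans (Polynomial.natDegree_add_le _ _) (max_le ?_ ?_)) ?_)
            · rw [Polynomial.natDegree_C]; omega
            · refine le_trans (Polynomial.natDegree_C_mul_le _ _) ?_
              rw [Polynomial.natDegree_X_pow]; omega
            · rw [Polynomial.natDegree_X_pow]
          have hroots : ∀ w ∈ KF.erase 0, Polynomial.eval w P = 0 := by
            intro w hw
            have hw0 := (Finset.mem_erase.mp hw).1
            have hwK : w^Q = w := (hKFmem w).mp (Finset.mem_erase.mp hw).2
            have hww : w*w⁻¹ = 1 := mul_inv_cancel₀ hw0
            have hw4 : w^4 = w := by rw [← hQ4]; exact hwK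
            have hw3 : w^3 = 1 := by
              apply mul_right_cancel₀ hw0
              rw [one_mul, ← pow_succ]
              exact hw4
            have hτval := hτβ w hwK hw0
            have hτexp : τf (w*T⁻¹ + 1 + c*w⁻¹)
                = (w*T⁻¹ + 1 + c*w⁻¹) + (w*T⁻¹ + 1 + c*w⁻¹)^2 := by
              rw [hτf]
              simp only
              rw [hm2']
              rw [Finset.sum_range_succ, Finset.sum_range_one]
              norm_num
            rw [hτexp] at hτval
            have hId : Polynomial.eval w P
                = w^2*((w*T⁻¹ + 1 + c*w⁻¹) + (w*T⁻¹ + 1 + c*w⁻¹)^2 + 1) := by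
              simp only [hPdef, Polynomial.eval_add, Polynomial.eval_mul,
                Polynomial.eval_pow, Polynomial.eval_C, Polynomial.eval_X]
              linear_combination (-c^2 - 3*w*c - w*w⁻¹*c^2 - 2*w^2*T⁻¹*c) * hww
                + (-3*T⁻¹ - w*T⁻¹^2) * hw3
                + (-T⁻¹ - w*c - w^2 - w^2*T⁻¹*c) * h2z
            rw [hId, hτval]
            linear_combination w^2 * h2z
          have hsub : KF.erase 0 ⊆ P.roots.toFinset := by
            intro w hw
            rw [Multiset.mem_toFinset, Polynomial.mem_roots']
            exact ⟨hPne, hroots w hw⟩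
          have hcv := Finset.card_le_card hsub
          have hc2 := Multiset.toFinset_card_le P.roots
          have hc3 := Polynomial.card_roots' P
          omega
        · -- m ≥ 3
          obtain ⟨m1, hm1⟩ : ∃ m1, m = m1+1 := ⟨m-1, by omega⟩
          have hm1ge : 2 ≤ m1 := by omega
          have hQm1 : Q = 2*2^m1 := by rw [hQm, hm1, pow_succ]; ring
          have hm1pow : 4 ≤ (2:ℕ)^m1 := by
            calc (4:ℕ) = 2^2 := by norm_num
            _ ≤ 2^m1 := Nat.pow_le_pow_right (by norm_num) hm1ge
          have hp1 : (2:ℕ)^m1 = 2*2^(m1-1) := by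
            rw [← pow_succ']
            congr 1
            omega
          have hp2 : 2 ≤ (2:ℕ)^(m1-1) := by
            calc (2:ℕ) = 2^1 := by norm_num
            _ ≤ 2^(m1-1) := Nat.pow_le_pow_right (by norm_num) (by omega)
          set P : Polynomial F :=
            (∑ i ∈ Finset.range m1, Polynomial.C ((T⁻¹)^(2^i)) * Polynomial.X^(2^m1+2^i))
            + Polynomial.C ((T⁻¹)^(2^m1)) * Polynomial.X^1
            + Polynomial.C (((m1+1 : ℕ):F)+1) * Polynomial.X^(2^m1)
            + ∑ i ∈ Finset.range (m1+1), Polynomial.C (c^(2^i)) * Polynomial.X^(2^m1 - 2^i)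
            with hPdef
          have hc1 : P.coeff 1 = (T⁻¹)^(2^m1) := by
            rw [hPdef]
            simp only [Polynomial.coeff_add, Polynomial.finset_sum_coeff,
              Polynomial.coeff_C_mul, Polynomial.coeff_X_pow]
            have hz1 : ∀ i ∈ Finset.range m1,
                (T⁻¹)^(2^i) * (if (1:ℕ) = 2^m1+2^i then (1:F) else 0) = 0 := by
              intro i _
              have h01 : 0 < (2:ℕ)^i := Nat.pow_pos (by norm_num)
              rw [if_neg (by omega), mul_zero]
            have hz2 : ∀ i ∈ Finset.range (m1+1),
                c^(2^i) * (if (1:ℕ) = 2^m1-2^i then (1:F) else 0) = 0 := by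
              intro i hi
              have him := Finset.mem_range.mp hi
              have hne1 : (2:ℕ)^m1 - 2^i ≠ 1 := by
                rcases Nat.lt_succ_iff_lt_or_eq.mp him with hlt | he
                · have h1 : (2:ℕ)^i ≤ 2^(m1-1) :=
                    Nat.pow_le_pow_right (by norm_num) (by omega)
                  omega
                · rw [he]
                  omega
              rw [if_neg (fun hcc => hne1 hcc.symm), mul_zero]
            rw [Finset.sum_eq_zero hz1, Finset.sum_eq_zero hz2]
            have hne2 : ¬(1:ℕ) = 2^m1 := by omega
            rw [if_neg hne2]
            simp
          have hPne : P ≠ 0 := by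
            intro h
            rw [h, Polynomial.coeff_zero] at hc1
            exact (pow_ne_zero _ (inv_ne_zero hTne)) hc1.symm
          have hPdeg : P.natDegree ≤ 2^m1 + 2^(m1-1) := by
            rw [hPdef]
            refine le_trans (Polynomial.natDegree_add_le _ _) (max_le
              (le_trans (Polynomial.natDegree_add_le _ _) (max_le
                (le_trans (Polynomial.natDegree_add_le _ _) (max_le ?_ ?_)) ?_)) ?_)
            · apply Polynomial.natDegree_sum_le_of_forall_le
              intro i hi
              refine le_trans (Polynomial.natDegree_C_mul_le _ _) ?_
              rw [Polynomial.natDegree_X_pow]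
              have : (2:ℕ)^i ≤ 2^(m1-1) := Nat.pow_le_pow_right (by norm_num)
                (by have := Finset.mem_range.mp hi; omega)
              omega
            · refine le_trans (Polynomial.natDegree_C_mul_le _ _) ?_
              rw [Polynomial.natDegree_X_pow]
              omega
            · refine le_trans (Polynomial.natDegree_C_mul_le _ _) ?_
              rw [Polynomial.natDegree_X_pow]
              omega
            · apply Polynomial.natDegree_sum_le_of_forall_le
              intro i hi
              refine le_trans (Polynomial.natDegree_C_mul_le _ _) ?_
              rw [Polynomial.natDegree_X_pow]
              exact le_trans (Nat.sub_le _ _) (Nat.le_add_right _ _)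
          have hroots : ∀ w ∈ KF.erase 0, Polynomial.eval w P = 0 := by
            intro w hw
            have hw0 := (Finset.mem_erase.mp hw).1
            have hwK : w^Q = w := (hKFmem w).mp (Finset.mem_erase.mp hw).2
            have hww : w*w⁻¹ = 1 := mul_inv_cancel₀ hw0
            have hwm : w^(2^m1 + 2^m1) = w := by
              have h1 : (2:ℕ)^m1 + 2^m1 = Q := by rw [hQm1]; ring
              rw [h1]
              exact hwK
            have hτval := hτβ w hwK hw0
            rw [hτf] at hτval
            simp only at hτval
            rw [hm1] at hτval
            have hterm : ∀ i ∈ Finset.range (m1+1), (w*T⁻¹ + 1 + c*w⁻¹)^(2^i)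
                = (T⁻¹)^(2^i) * w^(2^i) + 1 + c^(2^i) * (w⁻¹)^(2^i) := by
              intro i _
              rw [add_pow_char_pow (w*T⁻¹+1) (c*w⁻¹) 2 i, add_pow_char_pow (w*T⁻¹) 1 2 i,
                  one_pow, mul_pow, mul_pow]
              ring
            rw [Finset.sum_congr rfl hterm, Finset.sum_add_distrib, Finset.sum_add_distrib,
                Finset.sum_const, Finset.card_range, nsmul_eq_mul, mul_one] at hτval
            have he1 : Polynomial.eval w P =
                (∑ i ∈ Finset.range m1, (T⁻¹)^(2^i) * w^(2^m1+2^i))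
                + (T⁻¹)^(2^m1) * w^1 + (((m1+1 : ℕ):F)+1) * w^(2^m1)
                + ∑ i ∈ Finset.range (m1+1), c^(2^i) * w^(2^m1 - 2^i) := by
              rw [hPdef]
              simp [Polynomial.eval_finset_sum]
            rw [he1]
            have hA : w^(2^m1) * (∑ i ∈ Finset.range (m1+1), (T⁻¹)^(2^i) * w^(2^i))
                = (∑ i ∈ Finset.range m1, (T⁻¹)^(2^i) * w^(2^m1+2^i))
                  + (T⁻¹)^(2^m1) * w^1 := by
              rw [Finset.mul_sum, Finset.sum_range_succ]
              congr 1
              · apply Finset.sum_congr rfl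
                intro i _
                rw [pow_add]
                ring
              · have h5 : w^(2^m1) * ((T⁻¹)^(2^m1) * w^(2^m1))
                    = (T⁻¹)^(2^m1) * w^(2^m1 + 2^m1) := by
                  rw [pow_add]
                  ring
                rw [h5, hwm, pow_one]
            have hB : w^(2^m1) * (∑ i ∈ Finset.range (m1+1), c^(2^i) * (w⁻¹)^(2^i))
                = ∑ i ∈ Finset.range (m1+1), c^(2^i) * w^(2^m1 - 2^i) := by
              rw [Finset.mul_sum]
              apply Finset.sum_congr rfl
              intro i hi
              have hle : (2:ℕ)^i ≤ 2^m1 := Nat.pow_le_pow_right (by norm_num)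
                (by have := Finset.mem_range.mp hi; omega)
              have hsplit2 : w^(2^m1) = w^(2^m1 - 2^i) * w^(2^i) := by
                rw [← pow_add]
                congr 1
                omega
              have hcanc : w^(2^i) * (w⁻¹)^(2^i) = 1 := by
                rw [← mul_pow, hww, one_pow]
              calc w^(2^m1) * (c^(2^i) * (w⁻¹)^(2^i))
                  = c^(2^i) * w^(2^m1-2^i) * (w^(2^i) * (w⁻¹)^(2^i)) := by
                    rw [hsplit2]
                    ring
              _ = c^(2^i) * w^(2^m1-2^i) := by rw [hcanc, mul_one]
            linear_combination (-1 : F)*hA - hB + w^(2^m1)*hτval + w^(2^m1)*h2z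
          have hsub : KF.erase 0 ⊆ P.roots.toFinset := by
            intro w hw
            rw [Multiset.mem_toFinset, Polynomial.mem_roots']
            exact ⟨hPne, hroots w hw⟩
          have hcv := Finset.card_le_card hsub
          have hc2 := Multiset.toFinset_card_le P.roots
          have hc3 := Polynomial.card_roots' P
          omega
      -- build the collision from the parameter
      obtain ⟨w, ⟨hwK, hw0⟩, v, hvK, hveq⟩ := hcoll
      have hvT : T*w*(v^2+v) = w^2 + T*w + S + T*μ := by
        rw [hveq, hcdef]
        field_simp
        ring
      have hμT : T*μ^2 = nn := by
        rw [hμsq]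
        field_simp
      have hCz : T*((w*v+μ)^2 + (w*v+μ)*w) = w^3 + T*w^2 + S*w + nn := by
        linear_combination w*hvT + hμT + (T*μ*w + T*w*v*μ)*h2z
      set z := w*v + μ with hzdef
      have hzK : z^Q = z := by
        rw [hzdef, hfrob, mul_pow, hwK, hvK, hμK]
      have hzwK : (z+w)^Q = z+w := by rw [hfrob, hzK, hwK]
      have hq4 : ∀ t : F, t*(t+α^(Q^2))*(t+α^Q)*(t+α) = t^4 + T*t^3 + S*t^2 + nn*t := by
        intro t
        rw [hTdef, hSdef, hnndef]
        ring
      have hgeq : z^4 + T*z^3 + S*z^2 + nn*z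
          = (z+w)^4 + T*(z+w)^3 + S*(z+w)^2 + nn*(z+w) := by
        linear_combination (-w)*hCz + (-(w*nn) - w*z*S - w*z^2*T - 2*w*z^3 - w^2*S
          - w^2*z*T - 3*w^2*z^2 - w^3*T - 2*w^3*z - w^4)*h2z
      have hgprod : z*(z+α^(Q^2))*(z+α^Q)*(z+α)
          = (z+w)*((z+w)+α^(Q^2))*((z+w)+α^Q)*((z+w)+α) := by
        rw [hq4 z, hq4 (z+w)]
        exact hgeq
      have hprodne : ∀ t : F, t^Q = t → t ≠ 0 → t*(t+α^(Q^2))*(t+α^Q)*(t+α) ≠ 0 := by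
        intro t htK ht0
        exact mul_ne_zero (mul_ne_zero (mul_ne_zero ht0 (hfac3 t htK)) (hfac2 t htK))
          (hfac1 t htK)
      have hzw0 : z + w ≠ 0 := by
        intro h0
        have hzw : z = w := by linear_combination h0 - w*h2z
        have hrhs : (z+w)*((z+w)+α^(Q^2))*((z+w)+α^Q)*((z+w)+α) = 0 := by
          rw [h0]
          ring
        rw [← hgprod] at hrhs
        exact hprodne z hzK (by rw [hzw]; exact hw0) hrhs
      have hz0 : z ≠ 0 := by
        intro h0
        have hlhs : z*(z+α^(Q^2))*(z+α^Q)*(z+α) = 0 := by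
          rw [h0]
          ring
        rw [hgprod] at hlhs
        exact hprodne (z+w) hzwK hzw0 hlhs
      obtain ⟨x, hx0, hxs⟩ := hnormsurj z hz0 hzK
      obtain ⟨y, hy0, hys⟩ := hnormsurj (z+w) hzw0 hzwK
      have hgx : (x*(z+α))^(Q^2+Q+1) = z*(z+α^(Q^2))*(z+α^Q)*(z+α) := by
        rw [mul_pow, hxs, hsplit (z+α), hconjQ z hzK, hconjQ2 z hzK]
        ring
      have hgy : (y*((z+w)+α))^(Q^2+Q+1)
          = (z+w)*((z+w)+α^(Q^2))*((z+w)+α^Q)*((z+w)+α) := by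
        rw [mul_pow, hys, hsplit ((z+w)+α), hconjQ (z+w) hzwK, hconjQ2 (z+w) hzwK]
        ring
      have hxzne : x*(z+α) ≠ 0 := mul_ne_zero hx0 (hfac1 z hzK)
      set u := (y*((z+w)+α)) * (x*(z+α))⁻¹ with hudef
      have hus : u^(Q^2+Q+1) = 1 := by
        rw [hudef, mul_pow, inv_pow, hgy, hgx, ← hgprod]
        exact mul_inv_cancel₀ (hprodne z hzK hz0)
      have hNux : (u*x)^(Q^2+Q+1) = z := by rw [mul_pow, hus, one_mul, hxs]
      have hfval : (fun x : F => x ^ (Q ^ 2 + Q + 2) + α * x) (u*x)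
          = (fun x : F => x ^ (Q ^ 2 + Q + 2) + α * x) y := by
        simp only
        rw [hfx (u*x), hfx y, hys, hNux, hudef]
        calc y*((z+w)+α) * (x*(z+α))⁻¹ * x * (z+α)
            = y*((z+w)+α) * ((x*(z+α))⁻¹ * (x*(z+α))) := by ring
        _ = y*((z+w)+α) := by rw [inv_mul_cancel₀ hxzne, mul_one]
        _ = y*((z+w)+α) := rfl
      have hxy := hinjf hfval
      have hzz : z = z + w := by
        calc z = (u*x)^(Q^2+Q+1) := hNux.symm
        _ = y^(Q^2+Q+1) := by rw [hxy]
        _ = z+w := hys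
      exact hw0 (by linear_combination (-1 : F)*hzz)
  · intro hT
    have : Finite F := Finite.of_fintype F
    exact (Finite.injective_iff_bijective).mp (hinj_of_T hT)
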